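/- Let C be a small category and J a Grothendieck topology on C. Then the following are equivalent: (i) for every object c of C and every sieve R on c, the sieve R ⊔ ¬R is J-covering; (ii) for every presheaf E : Cᵒᵖ ⥤ Type and every subpresheaf A of E, the subpresheaf A ⊔ N(A) is J-dense in E. -/

import Mathlib

open CategoryTheory CategoryTheory.GrothendieckTopology Opposite

universe u

namespace Stmt10

variable {C : Type u} [SmallCategory C]

/-- The pseudocomplement `¬R` of a sieve `R` on `c`: the sieve of morphisms `f` with
codomain `c` whose pullback sieve `f*(R)` is empty. -/
def negSieve {c : C} (R : Sieve c) : Sieve c where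
  arrows := fun _ f => R.pullback f = ⊥
  downward_closed := by
    intro d e f hf g
    rw [Sieve.pullback_comp, hf]
    exact le_antisymm (fun Y h hh => hh) bot_le

/-- The subpresheaf `N(A)` of `E`, whose sections at `c` are the sections `e ∈ E(c)` such
that no restriction of `e` along any morphism lies in `A`. -/
def negSub (E : Cᵒᵖ ⥤ Type u) (A : Subfunctor E) : Subfunctor E where
  obj c := {e | ∀ (d : C) (f : d ⟶ unop c), E.map f.op e ∉ A.obj (op d)}
  map := by
    intro U V i e he d f hf
    apply he d (f ≫ i.unop)
    have : (f ≫ i.unop).op = i ≫ f.op := rfl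
    rw [this, FunctorToTypes.map_comp_apply] at *
    exact hf

/-- The union `A ⊔ B` of two subpresheaves of `E`. -/
def unionSub (E : Cᵒᵖ ⥤ Type u) (A B : Subfunctor E) : Subfunctor E where
  obj c := A.obj c ∪ B.obj c
  map := by
    intro U V i e he
    rcases he with h | h
    · exact Or.inl (A.map i h)
    · exact Or.inr (B.map i h)

/-- A sieve `R` on `c` as a subpresheaf of `yoneda.obj c`. -/
def sieveSub {c : C} (R : Sieve c) : Subfunctor (yoneda.obj c) where
  obj d := {f | R f}
  map := fun i _ hf => R.downward_closed hf i.unop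

/-- `R ⊔ ¬R` is `J`-covering for every sieve `R` if and only if for every presheaf `E`
and every subpresheaf `A` of `E`, the subpresheaf `A ⊔ N(A)` is `J`-dense in `E`, i.e.
all the sieves `S^{A ⊔ N(A)}_(c,e)` are `J`-covering. -/
theorem statement10 (J : GrothendieckTopology C) :
    (∀ (c : C) (R : Sieve c), R ⊔ negSieve R ∈ J c) ↔
    (∀ (E : Cᵒᵖ ⥤ Type u) (A : Subfunctor E) (c : C) (e : E.obj (op c)),
      (unionSub E A (negSub E A)).sieveOfSection e ∈ J c) := by
  constructor
  · intro h E A c e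
    set R : Sieve c := ⟨fun d f => E.map f.op e ∈ A.obj (op d), by
      intro d d' f hf g
      have : (g ≫ f).op = f.op ≫ g.op := rfl
      rw [this, FunctorToTypes.map_comp_apply]
      exact A.map g.op hf⟩ with hR
    refine J.superset_covering ?_ (h c R)
    rintro d f (hf | hf)
    · exact Or.inl hf
    · refine Or.inr fun d' g hg => ?_
      have : (g ≫ f).op = f.op ≫ g.op := rfl
      rw [← FunctorToTypes.map_comp_apply, ← this] at hg
      have : R.pullback f = ⊥ := hf
      have := congrArg (fun (S : Sieve d) => S.arrows g) this
      simp only [Sieve.pullback_apply] at this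
      change R.arrows (g ≫ f) at hg
      rw [this] at hg
      exact hg
  · intro h c R
    refine J.superset_covering ?_ (h (yoneda.obj c) (sieveSub R) c (𝟙 c))
    rintro d f (hf | hf)
    · apply Or.inl
      simpa [sieveSub] using hf
    · apply Or.inr
      show R.pullback f = ⊥
      refine le_antisymm (fun d' g hg => ?_) bot_le
      exact absurd (by simpa [sieveSub] using hg) (hf d' g)

end Stmt10
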